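/- Φ is continuously differentiable on (0,∞) with Φ'(b) = 1 and Φ'(x) ≥ 1 for all x > 0, and Φ solves the quasi-variational inequality of the singular dividend control problem: for every x > 0, max{ g(x)·Φ'(x) − (λ+δ)·Φ(x) + λ·∫₀ˣ Φ(x−y)·α·e^{−αy} dy , 1 − Φ'(x) } = 0. -/

import Mathlib

open Set intervalIntegral MeasureTheory

lemma conv_rw (al x : ℝ) (F : ℝ → ℝ) :
    (∫ y in (0:ℝ)..x, F (x - y) * (al * Real.exp (-al * y)))
      = al * Real.exp (-al * x) * ∫ u in (0:ℝ)..x, F u * Real.exp (al * u) := by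
  have h1 : (∫ y in (0:ℝ)..x, F (x - y) * (al * Real.exp (-al * y)))
      = ∫ y in (0:ℝ)..x, (fun u => F u * (al * Real.exp (-al * (x - u)))) (x - y) := by
    apply intervalIntegral.integral_congr
    intro y _
    simp [sub_sub_cancel]
  rw [h1, intervalIntegral.integral_comp_sub_left (fun u => F u * (al * Real.exp (-al * (x - u)))) x]
  simp only [sub_self, sub_zero]
  rw [← intervalIntegral.integral_const_mul]
  apply intervalIntegral.integral_congr
  intro u _
  simp only []
  rw [show -al * (x - u) = -al * x + al * u by ring, Real.exp_add]
  ring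

theorem stmt_15 (lam del al b : ℝ) (g g' ψ ψ' ψ'' Φ : ℝ → ℝ)
    (hlam : 0 < lam) (hdel : 0 < del) (hal : 0 < al)
    (hg : ∀ x ≥ (0:ℝ), HasDerivAt g (g' x) x)
    (hg'c : ContinuousOn g' (Set.Ici 0))
    (hgpos : ∀ x ≥ (0:ℝ), 0 ≤ g x)
    (hψd : ∀ x ≥ (0:ℝ), HasDerivAt ψ (ψ' x) x)
    (hψd2 : ∀ x ≥ (0:ℝ), HasDerivAt ψ' (ψ'' x) x)
    (hψ''c : ContinuousOn ψ'' (Set.Ici 0))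
    (hψmono : StrictMonoOn ψ (Set.Ici 0))
    (hψ0 : 0 ≤ ψ 0)
    (hψeq : ∀ x > (0:ℝ),
      g x * ψ' x - (lam + del) * ψ x
        + lam * ∫ y in (0:ℝ)..x, ψ (x - y) * (al * Real.exp (-al * y)) = 0)
    (hb : 0 < b)
    (hbmin : ∀ x ≥ (0:ℝ), ψ' b ≤ ψ' x)
    (hψ'' : ∀ x > b, 0 ≤ ψ'' x)
    (hΦ : ∀ x, Φ x = if x ≤ b then ψ x / ψ' b else x - b + ψ b / ψ' b) :
    (∀ x > (0:ℝ), DifferentiableAt ℝ Φ x) ∧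
    ContinuousOn (deriv Φ) (Set.Ioi 0) ∧
    deriv Φ b = 1 ∧
    (∀ x > (0:ℝ), 1 ≤ deriv Φ x) ∧
    ∀ x > (0:ℝ),
      max (g x * deriv Φ x - (lam + del) * Φ x
          + lam * ∫ y in (0:ℝ)..x, Φ (x - y) * (al * Real.exp (-al * y)))
        (1 - deriv Φ x) = 0 := by
  have hΦfun : Φ = fun x => if x ≤ b then ψ x / ψ' b else x - b + ψ b / ψ' b := funext hΦ
  subst hΦfun
  set Φ : ℝ → ℝ := fun x => if x ≤ b then ψ x / ψ' b else x - b + ψ b / ψ' b with hΦdef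
  have hψpos : ∀ x > (0:ℝ), 0 < ψ x := fun x hx =>
    lt_of_le_of_lt hψ0 (hψmono (Set.mem_Ici.mpr le_rfl) (Set.mem_Ici.mpr hx.le) hx)
  have hψc : ContinuousOn ψ (Set.Ici 0) := fun x hx => (hψd x hx).continuousAt.continuousWithinAt
  have hψ'c : ContinuousOn ψ' (Set.Ici 0) := fun x hx => (hψd2 x hx).continuousAt.continuousWithinAt
  -- positivity of ψ' b
  have hexp_int : ∫ y in (0:ℝ)..b, al * Real.exp (-al * y) = 1 - Real.exp (-al * b) := by
    have hF : ∀ y ∈ Set.uIcc (0:ℝ) b, HasDerivAt (fun y => -Real.exp (-al * y)) (al * Real.exp (-al * y)) y := by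
      intro y _
      have hlin : HasDerivAt (fun y : ℝ => -al * y) (-al) y := by
        simpa using (hasDerivAt_id y).const_mul (-al)
      have h := (hlin.exp).neg
      exact (h : HasDerivAt (fun y => -Real.exp (-al * y)) _ y).congr_deriv (by ring)
    have := intervalIntegral.integral_eq_sub_of_hasDerivAt hF
      (Continuous.intervalIntegrable (by fun_prop) 0 b)
    rw [this, show (-al * (0:ℝ)) = 0 by ring, Real.exp_zero]
    ring
  have hIb : (∫ y in (0:ℝ)..b, ψ (b - y) * (al * Real.exp (-al * y)))
      ≤ ψ b * (1 - Real.exp (-al * b)) := by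
    have hint1 : IntervalIntegrable (fun y => ψ (b - y) * (al * Real.exp (-al * y))) volume 0 b := by
      apply ContinuousOn.intervalIntegrable
      rw [Set.uIcc_of_le hb.le]
      apply ContinuousOn.mul
      · apply hψc.comp (Continuous.continuousOn (by fun_prop))
        intro y hy
        exact Set.mem_Ici.mpr (sub_nonneg.mpr hy.2)
      · exact Continuous.continuousOn (by fun_prop)
    have hint2 : IntervalIntegrable (fun y => ψ b * (al * Real.exp (-al * y))) volume 0 b :=
      Continuous.intervalIntegrable (by fun_prop) 0 b
    have hmono : ∀ y ∈ Set.Icc (0:ℝ) b,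
        ψ (b - y) * (al * Real.exp (-al * y)) ≤ ψ b * (al * Real.exp (-al * y)) := by
      intro y hy
      have h1 : ψ (b - y) ≤ ψ b := by
        rcases eq_or_lt_of_le hy.1 with h | h
        · rw [← h]; simp
        · exact (hψmono.monotoneOn (Set.mem_Ici.mpr (sub_nonneg.mpr hy.2))
            (Set.mem_Ici.mpr hb.le) (by linarith))
      exact mul_le_mul_of_nonneg_right h1 (by positivity)
    calc (∫ y in (0:ℝ)..b, ψ (b - y) * (al * Real.exp (-al * y)))
        ≤ ∫ y in (0:ℝ)..b, ψ b * (al * Real.exp (-al * y)) :=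
          intervalIntegral.integral_mono_on hb.le hint1 hint2 hmono
      _ = ψ b * (1 - Real.exp (-al * b)) := by
          rw [intervalIntegral.integral_const_mul, hexp_int]
  have hc : 0 < ψ' b := by
    have heq := hψeq b hb
    have hgψ' : 0 < g b * ψ' b := by
      have hψb := hψpos b hb
      have hE := Real.exp_pos (-al * b)
      nlinarith [mul_le_mul_of_nonneg_left hIb hlam.le, mul_pos hdel hψb, mul_pos (mul_pos hlam hψb) hE]
    rcases mul_pos_iff.mp hgψ' with ⟨_, h⟩ | ⟨h, _⟩
    · exact h
    · linarith [hgpos b hb.le]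
  have hone : ψ' b / ψ' b = 1 := div_self hc.ne'
  have hΦle : ∀ x, x ≤ b → Φ x = ψ x / ψ' b := fun x hx => if_pos hx
  have hΦgt : ∀ x, b < x → Φ x = x - b + ψ b / ψ' b := fun x hx => if_neg (not_le.mpr hx)
  have hΦd : ∀ x > (0:ℝ), HasDerivAt Φ (if x ≤ b then ψ' x / ψ' b else 1) x := by
    intro x hx
    rcases lt_trichotomy x b with hlt | heqb | hgt
    · rw [if_pos hlt.le]
      apply ((hψd x hx.le).div_const (ψ' b)).congr_of_eventuallyEq
      filter_upwards [Iio_mem_nhds hlt] with y hy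
      exact hΦle y hy.le
    · subst heqb
      rw [if_pos le_rfl, hone]
      have hIic : HasDerivWithinAt Φ 1 (Set.Iic x) x := by
        have h := ((hψd x hx.le).div_const (ψ' x)).hasDerivWithinAt (s := Set.Iic x)
        rw [hone] at h
        exact h.congr (fun y hy => hΦle y hy) (hΦle x le_rfl)
      have hIci : HasDerivWithinAt Φ 1 (Set.Ici x) x := by
        have h : HasDerivAt (fun y : ℝ => y - x + ψ x / ψ' x) 1 x := by
          simpa using ((hasDerivAt_id x).sub_const x).add_const (ψ x / ψ' x)
        refine (h.hasDerivWithinAt).congr (fun y hy => ?_) ?_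
        · rcases eq_or_lt_of_le (Set.mem_Ici.mp hy) with h' | h'
          · rw [← h', hΦle x le_rfl]; ring
          · rw [hΦgt y h']
        · rw [hΦle x le_rfl]; ring
      have hu := hIic.union hIci
      rw [Set.Iic_union_Ici] at hu
      exact hu.hasDerivAt Filter.univ_mem
    · rw [if_neg (not_le.mpr hgt)]
      have h : HasDerivAt (fun y : ℝ => y - b + ψ b / ψ' b) 1 x := by
        simpa using ((hasDerivAt_id x).sub_const b).add_const (ψ b / ψ' b)
      apply h.congr_of_eventuallyEq
      filter_upwards [Ioi_mem_nhds hgt] with y hy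
      exact hΦgt y hy
  have hΦdiff : ∀ x > (0:ℝ), DifferentiableAt ℝ Φ x := fun x hx => (hΦd x hx).differentiableAt
  have hderiv : ∀ x > (0:ℝ), deriv Φ x = if x ≤ b then ψ' x / ψ' b else 1 :=
    fun x hx => (hΦd x hx).deriv
  have hderivb : deriv Φ b = 1 := by rw [hderiv b hb, if_pos le_rfl, hone]
  have hd_ge : ∀ x > (0:ℝ), 1 ≤ deriv Φ x := by
    intro x hx
    rw [hderiv x hx]
    split
    · exact (one_le_div hc).mpr (hbmin x hx.le)
    · exact le_rfl
  have hΦd1 : ∀ t, b < t → HasDerivAt Φ 1 t := by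
    intro t ht
    have h := hΦd t (hb.trans ht)
    rwa [if_neg (not_le.mpr ht)] at h
  have hdc : ContinuousOn (deriv Φ) (Set.Ioi 0) := by
    have hcont : ContinuousOn (fun x => if x ≤ b then ψ' x / ψ' b else 1) (Set.Ioi (0:ℝ)) := by
      apply ContinuousOn.if
      · intro a ha
        have hfr : a ∈ frontier (Set.Iic b) := ha.2
        rw [frontier_Iic] at hfr
        rw [Set.mem_singleton_iff.mp hfr, hone]
      · apply ContinuousOn.div_const
        apply hψ'c.mono
        intro y hy
        exact le_of_lt (Set.mem_Ioi.mp hy.1)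
      · exact continuousOn_const
    exact hcont.congr (fun x hx => hderiv x hx)
  -- continuity of Φ
  have hΦc : ContinuousOn Φ (Set.Ici 0) := by
    rw [hΦdef]
    apply ContinuousOn.if
    · intro a ha
      have hfr : a ∈ frontier (Set.Iic b) := ha.2
      rw [frontier_Iic] at hfr
      rw [Set.mem_singleton_iff.mp hfr]
      ring
    · exact (hψc.mono (fun y hy => hy.1)).div_const _
    · exact (Continuous.continuousOn (by fun_prop))
  have hΦcAt : ∀ t > (0:ℝ), ContinuousAt Φ t := fun t ht => (hΦdiff t ht).continuousAt
  -- the transformed integrals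
  set Jψ : ℝ → ℝ := fun t => ∫ u in (0:ℝ)..t, ψ u * Real.exp (al * u) with hJψdef
  set JΦ : ℝ → ℝ := fun t => ∫ u in (0:ℝ)..t, Φ u * Real.exp (al * u) with hJΦdef
  have hψint : ∀ t ≥ (0:ℝ), IntervalIntegrable (fun u => ψ u * Real.exp (al * u)) volume 0 t := by
    intro t ht
    apply ContinuousOn.intervalIntegrable
    rw [Set.uIcc_of_le ht]
    exact (hψc.mono (fun y hy => hy.1)).mul (Continuous.continuousOn (by fun_prop))
  have hΦint : ∀ t ≥ (0:ℝ), IntervalIntegrable (fun u => Φ u * Real.exp (al * u)) volume 0 t := by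
    intro t ht
    apply ContinuousOn.intervalIntegrable
    rw [Set.uIcc_of_le ht]
    exact (hΦc.mono (fun y hy => hy.1)).mul (Continuous.continuousOn (by fun_prop))
  have hJψd : ∀ t > (0:ℝ), HasDerivAt Jψ (ψ t * Real.exp (al * t)) t := by
    intro t ht
    apply intervalIntegral.integral_hasDerivAt_right (hψint t ht.le)
    · apply ContinuousOn.stronglyMeasurableAtFilter isOpen_Ioi
        ((hψc.mono (fun y hy => le_of_lt hy)).mul (Continuous.continuousOn (by fun_prop))) t ht
    · exact ((hψd t ht.le).continuousAt).mul (by fun_prop)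
  have hJΦd : ∀ t > (0:ℝ), HasDerivAt JΦ (Φ t * Real.exp (al * t)) t := by
    intro t ht
    apply intervalIntegral.integral_hasDerivAt_right (hΦint t ht.le)
    · apply ContinuousOn.stronglyMeasurableAtFilter isOpen_Ioi
        ((hΦc.mono (fun y hy => le_of_lt hy)).mul (Continuous.continuousOn (by fun_prop))) t ht
    · exact (hΦcAt t ht).mul (by fun_prop)
  -- the exponential form of the equation
  have hEψ0 : ∀ t > (0:ℝ),
      Real.exp (al * t) * (g t * ψ' t - (lam + del) * ψ t) + lam * al * Jψ t = 0 := by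
    intro t ht
    have h := hψeq t ht
    rw [conv_rw] at h
    have he : Real.exp (al * t) * Real.exp (-al * t) = 1 := by
      rw [← Real.exp_add, show al * t + -al * t = 0 by ring, Real.exp_zero]
    linear_combination Real.exp (al * t) * h - lam * al * Jψ t * he
  -- second order ODE for ψ
  have hODE : ∀ t > (0:ℝ),
      g t * ψ'' t + (g' t + al * g t - (lam + del)) * ψ' t - del * al * ψ t = 0 := by
    intro t ht
    have h1 : HasDerivAt (fun s => Real.exp (al * s)) (al * Real.exp (al * t)) t := by
      have hlin : HasDerivAt (fun s : ℝ => al * s) al t := by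
        simpa using (hasDerivAt_id t).const_mul al
      simpa [mul_comm] using hlin.exp
    have h2 : HasDerivAt (fun s => g s * ψ' s - (lam + del) * ψ s)
        (g' t * ψ' t + g t * ψ'' t - (lam + del) * ψ' t) t := by
      exact ((hg t ht.le).mul (hψd2 t ht.le)).sub ((hψd t ht.le).const_mul (lam + del))
    have hd : HasDerivAt (fun s => Real.exp (al * s) * (g s * ψ' s - (lam + del) * ψ s)
          + lam * al * Jψ s)
        (al * Real.exp (al * t) * (g t * ψ' t - (lam + del) * ψ t)
          + Real.exp (al * t) * (g' t * ψ' t + g t * ψ'' t - (lam + del) * ψ' t)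
          + lam * al * (ψ t * Real.exp (al * t))) t :=
      (h1.mul h2).add ((hJψd t ht).const_mul (lam * al))
    have hz : HasDerivAt (fun s => Real.exp (al * s) * (g s * ψ' s - (lam + del) * ψ s)
          + lam * al * Jψ s) 0 t := by
      apply (hasDerivAt_const t (0:ℝ)).congr_of_eventuallyEq
      filter_upwards [Ioi_mem_nhds ht] with y hy
      exact hEψ0 y hy
    have h0 := hd.unique hz
    have hepos := Real.exp_pos (al * t)
    have h3 : Real.exp (al * t)
        * (g t * ψ'' t + (g' t + al * g t - (lam + del)) * ψ' t - del * al * ψ t) = 0 := by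
      linear_combination h0
    exact (mul_eq_zero.mp h3).resolve_left hepos.ne'
  -- ψ' is monotone on [b,∞)
  have hψ'mono : MonotoneOn ψ' (Set.Ici b) := by
    apply monotoneOn_of_deriv_nonneg (convex_Ici b)
    · exact hψ'c.mono (Set.Ici_subset_Ici.mpr hb.le)
    · rw [interior_Ici]
      intro t ht
      exact ((hψd2 t (hb.trans ht).le).differentiableAt).differentiableWithinAt
    · rw [interior_Ici]
      intro t ht
      rw [(hψd2 t (hb.trans ht).le).deriv]
      exact hψ'' t ht
  -- key inequality : ψ t ≤ ψ' t * Φ t for t > b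
  have hkey : ∀ t, b < t → ψ t ≤ ψ' t * (t - b + ψ b / ψ' b) := by
    intro t ht
    have ht0 : (0:ℝ) < t := hb.trans ht
    have hint1 : IntervalIntegrable ψ' volume b t := by
      apply ContinuousOn.intervalIntegrable
      rw [Set.uIcc_of_le ht.le]
      exact hψ'c.mono (fun y hy => le_trans hb.le hy.1)
    have hFTC : ∫ u in b..t, ψ' u = ψ t - ψ b := by
      apply intervalIntegral.integral_eq_sub_of_hasDerivAt
      · intro u hu
        rw [Set.uIcc_of_le ht.le] at hu
        exact hψd u (le_trans hb.le hu.1)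
      · exact hint1
    have hle : ∫ u in b..t, ψ' u ≤ ∫ u in b..t, ψ' t := by
      apply intervalIntegral.integral_mono_on ht.le hint1 intervalIntegrable_const
      intro u hu
      exact hψ'mono (Set.mem_Ici.mpr hu.1) (Set.mem_Ici.mpr ht.le) hu.2
    rw [intervalIntegral.integral_const, smul_eq_mul] at hle
    have h2 : ψ b / ψ' b * ψ' b = ψ b := div_mul_cancel₀ _ hc.ne'
    have h3 : ψ' b ≤ ψ' t := hbmin t ht0.le
    have h4 : ψ b / ψ' b * ψ' b ≤ ψ b / ψ' b * ψ' t :=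
      mul_le_mul_of_nonneg_left h3 (div_nonneg (hψpos b hb).le hc.le)
    nlinarith [hFTC, hle, h2, h4]
  set EΦ : ℝ → ℝ := fun t => Real.exp (al * t) * (g t - (lam + del) * Φ t) + lam * al * JΦ t
    with hEΦdef
  have hJb : JΦ b = Jψ b / ψ' b := by
    rw [hJΦdef, hJψdef]
    simp only []
    rw [← intervalIntegral.integral_div]
    apply intervalIntegral.integral_congr
    intro u hu
    rw [Set.uIcc_of_le hb.le] at hu
    show Φ u * Real.exp (al * u) = ψ u * Real.exp (al * u) / ψ' b
    rw [hΦle u hu.2]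
    ring
  have hEΦb : EΦ b = 0 := by
    have h := hEψ0 b hb
    rw [hEΦdef]
    simp only []
    rw [hJb, hΦle b le_rfl]
    field_simp
    linear_combination h
  have hEΦd : ∀ t, b < t → HasDerivAt EΦ
      (al * Real.exp (al * t) * (g t - (lam + del) * Φ t)
        + Real.exp (al * t) * (g' t - (lam + del) * 1)
        + lam * al * (Φ t * Real.exp (al * t))) t := by
    intro t ht
    have ht0 : (0:ℝ) < t := hb.trans ht
    have h1 : HasDerivAt (fun s => Real.exp (al * s)) (al * Real.exp (al * t)) t := by
      have hlin : HasDerivAt (fun s : ℝ => al * s) al t := by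
        simpa using (hasDerivAt_id t).const_mul al
      simpa [mul_comm] using hlin.exp
    have h2 : HasDerivAt (fun s => g s - (lam + del) * Φ s) (g' t - (lam + del) * 1) t :=
      (hg t ht0.le).sub ((hΦd1 t ht).const_mul (lam + del))
    exact (h1.mul h2).add ((hJΦd t ht0).const_mul (lam * al))
  have hDneg : ∀ t, b < t →
      al * Real.exp (al * t) * (g t - (lam + del) * Φ t)
        + Real.exp (al * t) * (g' t - (lam + del) * 1)
        + lam * al * (Φ t * Real.exp (al * t)) ≤ 0 := by
    intro t ht
    have ht0 : (0:ℝ) < t := hb.trans ht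
    have hO := hODE t ht0
    have hψ''t := hψ'' t ht
    have hgt := hgpos t ht0.le
    have hG : (g' t + al * g t - (lam + del)) * ψ' t ≤ del * al * ψ t := by
      nlinarith [mul_nonneg hgt hψ''t]
    have hkey' := hkey t ht
    have hψ'pos : 0 < ψ' t := lt_of_lt_of_le hc (hbmin t ht0.le)
    have hΦt : Φ t = t - b + ψ b / ψ' b := hΦgt t ht
    have hG2 : g' t + al * g t - (lam + del) ≤ del * al * Φ t := by
      rw [hΦt]
      have h5 : del * al * ψ t ≤ del * al * (ψ' t * (t - b + ψ b / ψ' b)) :=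
        mul_le_mul_of_nonneg_left hkey' (by positivity)
      have h6 : (g' t + al * g t - (lam + del)) * ψ' t
          ≤ (del * al * (t - b + ψ b / ψ' b)) * ψ' t := by nlinarith
      exact le_of_mul_le_mul_right h6 hψ'pos
    have hre : al * Real.exp (al * t) * (g t - (lam + del) * Φ t)
        + Real.exp (al * t) * (g' t - (lam + del) * 1)
        + lam * al * (Φ t * Real.exp (al * t))
        = Real.exp (al * t) * ((g' t + al * g t - (lam + del)) - del * al * Φ t) := by ring
    rw [hre]
    exact mul_nonpos_of_nonneg_of_nonpos (Real.exp_pos _).le (by linarith)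
  have hEΦle : ∀ x, b < x → EΦ x ≤ 0 := by
    intro x hx
    have hanti : AntitoneOn EΦ (Set.Icc b x) := by
      apply antitoneOn_of_deriv_nonpos (convex_Icc b x)
      · intro t ht
        have ht0 : (0:ℝ) < t := lt_of_lt_of_le hb ht.1
        apply ContinuousAt.continuousWithinAt
        rw [hEΦdef]
        exact (((by fun_prop : Continuous fun s : ℝ => Real.exp (al * s)).continuousAt).mul
          (((hg t ht0.le).continuousAt).sub ((hΦcAt t ht0).const_smul (lam + del)))).add
          (((hJΦd t ht0).continuousAt).const_smul (lam * al))
      · rw [interior_Icc]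
        intro t ht
        exact ((hEΦd t ht.1).differentiableAt).differentiableWithinAt
      · rw [interior_Icc]
        intro t ht
        rw [(hEΦd t ht.1).deriv]
        exact hDneg t ht.1
    have := hanti (Set.left_mem_Icc.mpr hx.le) (Set.right_mem_Icc.mpr hx.le) hx.le
    rw [hEΦb] at this
    exact this
  refine ⟨hΦdiff, hdc, hderivb, hd_ge, ?_⟩
  intro x hx
  rcases le_or_gt x b with hxb | hxb
  · -- x ≤ b : the equation holds exactly
    have hA : g x * deriv Φ x - (lam + del) * Φ x
        + lam * ∫ y in (0:ℝ)..x, Φ (x - y) * (al * Real.exp (-al * y)) = 0 := by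
      have hint : (∫ y in (0:ℝ)..x, Φ (x - y) * (al * Real.exp (-al * y)))
          = (∫ y in (0:ℝ)..x, ψ (x - y) * (al * Real.exp (-al * y))) / ψ' b := by
        rw [← intervalIntegral.integral_div]
        apply intervalIntegral.integral_congr
        intro y hy
        rw [Set.uIcc_of_le hx.le] at hy
        show Φ (x - y) * (al * Real.exp (-al * y)) = ψ (x - y) * (al * Real.exp (-al * y)) / ψ' b
        rw [hΦle (x - y) (by linarith [hy.1, hy.2])]
        ring
      rw [hderiv x hx, if_pos hxb, hΦle x hxb, hint]
      have h := hψeq x hx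
      linear_combination h / ψ' b
    have hB : 1 - deriv Φ x ≤ 0 := by linarith [hd_ge x hx]
    rw [hA, max_eq_left hB]
  · -- x > b : the inequality part
    have hB0 : deriv Φ x = 1 := by rw [hderiv x hx, if_neg (not_le.mpr hxb)]
    have hA : g x * deriv Φ x - (lam + del) * Φ x
        + lam * ∫ y in (0:ℝ)..x, Φ (x - y) * (al * Real.exp (-al * y)) ≤ 0 := by
      rw [hB0, conv_rw]
      have hE := hEΦle x hxb
      rw [hEΦdef] at hE
      simp only [] at hE
      have hexp := Real.exp_pos (-al * x)
      have he : Real.exp (-al * x) * Real.exp (al * x) = 1 := by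
        rw [← Real.exp_add, show -al * x + al * x = 0 by ring, Real.exp_zero]
      have h1 : Real.exp (-al * x)
          * (Real.exp (al * x) * (g x - (lam + del) * Φ x) + lam * al * JΦ x) ≤ 0 :=
        mul_nonpos_of_nonneg_of_nonpos hexp.le hE
      have h2 : Real.exp (-al * x)
          * (Real.exp (al * x) * (g x - (lam + del) * Φ x) + lam * al * JΦ x)
          = g x * 1 - (lam + del) * Φ x + lam * (al * Real.exp (-al * x) * JΦ x) := by
        linear_combination (g x - (lam + del) * Φ x) * he
      rw [h2] at h1
      exact h1
    have hBeq : 1 - deriv Φ x = 0 := by rw [hB0]; ring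
    rw [hBeq, max_eq_right hA]
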